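/- (Boundedness of the efficient score for the risk difference under positivity.) Let σ ∈ (0, 1/2) and suppose e, p₀ ∈ (σ, 1−σ) while p₁ ∈ (0,1) is arbitrary. Set ρ = p₁ − p₀, D = (1−e)/(p₀(1−p₀)) + e/(p₁(1−p₁)), h* = (1−ρ²)·e/(p₁(1−p₁)·D), ω = h*/(e·p₀(1−p₀)), and S(a, y) = ω·(a − e)·(y − a·ρ − p₀) for a, y ∈ {0,1}. Then |S(a,y)| ≤ 1/σ³ for all a, y ∈ {0,1}. -/

import Mathlib

set_option maxHeartbeats 800000

lemma rd_aux_bound (ω x z b : ℝ) (hω : 0 ≤ ω) (hb : ω ≤ b)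
    (hx : |x| ≤ 1) (hz : |z| ≤ 1) : |ω * x * z| ≤ b := by
  have h1 : |ω * x * z| = ω * |x| * |z| := by
    rw [abs_mul, abs_mul, abs_of_nonneg hω]
  rw [h1]
  calc ω * |x| * |z| ≤ ω * 1 * 1 := by
        apply mul_le_mul (mul_le_mul_of_nonneg_left hx hω) hz (abs_nonneg z)
        nlinarith [abs_nonneg x]
    _ = ω := by ring
    _ ≤ b := hb

/-- Boundedness of the efficient score for the risk difference under positivity:
if `e, p₀ ∈ (σ, 1−σ)` with `σ ∈ (0, 1/2)` and `p₁ ∈ (0,1)`, then with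
`ρ = p₁ − p₀` the efficient score `S(a,y) = ω(a − e)(y − aρ − p₀)` satisfies
`|S(a,y)| ≤ 1/σ³` for all `a, y ∈ {0,1}`. -/
theorem rd_efficient_score_bounded (σ e p₀ p₁ : ℝ)
    (hσ : σ ∈ Set.Ioo (0:ℝ) (1/2))
    (he : e ∈ Set.Ioo σ (1 - σ)) (hp₀ : p₀ ∈ Set.Ioo σ (1 - σ))
    (hp₁ : p₁ ∈ Set.Ioo (0:ℝ) 1) :
    let ρ : ℝ := p₁ - p₀
    let D : ℝ := (1 - e) / (p₀ * (1 - p₀)) + e / (p₁ * (1 - p₁))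
    let hstar : ℝ := (1 - ρ ^ 2) * e / (p₁ * (1 - p₁) * D)
    let ω : ℝ := hstar / (e * p₀ * (1 - p₀))
    let S : ℕ → ℕ → ℝ := fun a y => ω * ((a : ℝ) - e) * ((y : ℝ) - (a : ℝ) * ρ - p₀)
    ∀ a ∈ ({0, 1} : Finset ℕ), ∀ y ∈ ({0, 1} : Finset ℕ), |S a y| ≤ 1 / σ ^ 3 := by
  obtain ⟨hσ0, hσ2⟩ := hσ
  obtain ⟨he1, he2⟩ := he
  obtain ⟨hp01, hp02⟩ := hp₀
  obtain ⟨hp11, hp12⟩ := hp₁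
  intro ρ D hstar ω S
  have hρdef : ρ = p₁ - p₀ := rfl
  have he0 : (0:ℝ) < e := lt_trans hσ0 he1
  have he1' : e < 1 := by linarith
  have hA : (0:ℝ) < p₀ * (1 - p₀) := by nlinarith
  have hB : (0:ℝ) < p₁ * (1 - p₁) := by nlinarith
  have hD : 0 < D := by
    have h1 : 0 < (1 - e) / (p₀ * (1 - p₀)) := div_pos (by linarith) hA
    have h2 : 0 < e / (p₁ * (1 - p₁)) := div_pos he0 hB
    show 0 < (1 - e) / (p₀ * (1 - p₀)) + e / (p₁ * (1 - p₁))
    linarith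
  have hden : (0:ℝ) < (1 - e) * (p₁ * (1 - p₁)) + e * (p₀ * (1 - p₀)) := by
    nlinarith
  have hω : ω = (1 - ρ ^ 2) / ((1 - e) * (p₁ * (1 - p₁)) + e * (p₀ * (1 - p₀))) := by
    have hDval : p₁ * (1 - p₁) * D * (e * p₀ * (1 - p₀)) =
        e * ((1 - e) * (p₁ * (1 - p₁)) + e * (p₀ * (1 - p₀))) := by
      show p₁ * (1 - p₁) * ((1 - e) / (p₀ * (1 - p₀)) + e / (p₁ * (1 - p₁))) *
          (e * p₀ * (1 - p₀)) = _
      have hq0 : p₀ ≠ 0 := by linarith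
      have hq1 : 1 - p₀ ≠ 0 := by linarith
      have hq2 : p₁ ≠ 0 := by linarith
      have hq3 : 1 - p₁ ≠ 0 := by linarith
      field_simp
    show (1 - ρ ^ 2) * e / (p₁ * (1 - p₁) * D) / (e * p₀ * (1 - p₀)) = _
    rw [div_div, hDval, show (1 - ρ ^ 2) * e = e * (1 - ρ ^ 2) by ring,
      mul_div_mul_left _ _ he0.ne']
  have hρ1 : -1 < ρ := by rw [hρdef]; linarith
  have hρ2 : ρ < 1 := by rw [hρdef]; linarith
  have hnum : 0 < 1 - ρ ^ 2 := by nlinarith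
  have hω0 : 0 ≤ ω := by rw [hω]; positivity
  have hσ3 : (0:ℝ) < σ ^ 3 := by positivity
  have hωle : ω ≤ 1 / σ ^ 3 := by
    rw [hω, div_le_div_iff₀ hden hσ3]
    have h1 : σ * σ ≤ p₀ * (1 - p₀) :=
      mul_le_mul hp01.le (by linarith) hσ0.le (by linarith)
    have h2 : σ * (σ * σ) ≤ e * (p₀ * (1 - p₀)) :=
      mul_le_mul he1.le h1 (by positivity) he0.le
    nlinarith
  intro a ha y hy
  fin_cases ha <;> fin_cases hy <;>
    simp only [S, Nat.cast_zero, Nat.cast_one] <;>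
    apply rd_aux_bound _ _ _ _ hω0 hωle <;>
    rw [abs_le] <;> constructor <;> nlinarith
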